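/- Let p₁, p₂ ∈ (0,1), θ ∈ ℝ, and define f₀₀ = (1-p₁)(1-p₂) + p₁p₂θ, f₀₁ = (1-p₁)p₂ - p₁p₂θ, f₁₀ = p₁(1-p₂) - p₁p₂θ, f₁₁ = p₁p₂ + p₁p₂θ. Then for all u, v ∈ [0,1], with a₁ = 1/(1-p₁) and a₂ = 1/(1-p₂), Σ_{i∈{0,1}} Σ_{j∈{0,1}} f_{ij} · ( u^{a₁} - i·(u^{a₁}-u)/p₁ ) · ( v^{a₂} - j·(v^{a₂}-v)/p₂ ) = u·v·( 1 + θ·( 1 - u^{p₁/(1-p₁)} )·( 1 - v^{p₂/(1-p₂)} ) ). -/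

import Mathlib

open MeasureTheory ProbabilityTheory Set

/-- The real value (`0` or `1`) of a Bernoulli outcome. -/
noncomputable def bval (b : Bool) : ℝ := if b then 1 else 0

lemma rpow_split (x p : ℝ) (hx : 0 ≤ x) (hp : p ∈ Ioo (0:ℝ) 1) :
    x ^ (1 - p)⁻¹ = x * x ^ (p / (1 - p)) := by
  obtain ⟨hp0, hp1⟩ := hp
  have h1 : (0:ℝ) < 1 - p := by linarith
  rcases eq_or_lt_of_le hx with h | h
  · rw [← h]
    rw [Real.zero_rpow (by positivity), Real.zero_rpow (by positivity), zero_mul]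
  · have : (1 - p)⁻¹ = 1 + p / (1 - p) := by field_simp; ring
    rw [this, Real.rpow_add h, Real.rpow_one]

/-- Let `p₁, p₂ ∈ (0,1)`, `θ ∈ ℝ`, and let `(f₀₀, f₀₁, f₁₀, f₁₁)` be the bivariate
Bernoulli pmf with margins `p₁, p₂` and dependence parameter `θ`.  Then for `u, v ∈ [0,1]`
the bivariate GFGM copula equals the asymmetric modified Huang–Kotz FGM copula
`u v (1 + θ (1 - u^{p₁/(1-p₁)}) (1 - v^{p₂/(1-p₂)}))`. -/
theorem bivariate_gfgm_is_huang_kotz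
    (p₁ p₂ θ : ℝ) (hp₁ : p₁ ∈ Ioo (0 : ℝ) 1) (hp₂ : p₂ ∈ Ioo (0 : ℝ) 1)
    (f : Bool → Bool → ℝ)
    (hf00 : f false false = (1 - p₁) * (1 - p₂) + p₁ * p₂ * θ)
    (hf01 : f false true = (1 - p₁) * p₂ - p₁ * p₂ * θ)
    (hf10 : f true false = p₁ * (1 - p₂) - p₁ * p₂ * θ)
    (hf11 : f true true = p₁ * p₂ + p₁ * p₂ * θ)
    (u v : ℝ) (hu : u ∈ Icc (0 : ℝ) 1) (hv : v ∈ Icc (0 : ℝ) 1) :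
    ∑ i : Bool, ∑ j : Bool, f i j *
        (u ^ (1 - p₁)⁻¹ - bval i * ((u ^ (1 - p₁)⁻¹ - u) / p₁)) *
        (v ^ (1 - p₂)⁻¹ - bval j * ((v ^ (1 - p₂)⁻¹ - v) / p₂))
      = u * v * (1 + θ * (1 - u ^ (p₁ / (1 - p₁))) * (1 - v ^ (p₂ / (1 - p₂)))) := by
  have h1 := rpow_split u p₁ hu.1 hp₁
  have h2 := rpow_split v p₂ hv.1 hp₂
  simp only [Fintype.sum_bool, hf00, hf01, hf10, hf11, bval, Bool.false_eq_true, if_true, if_false,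
    one_mul, zero_mul, sub_zero, h1, h2]
  have hp₁0 : p₁ ≠ 0 := ne_of_gt hp₁.1
  have hp₂0 : p₂ ≠ 0 := ne_of_gt hp₂.1
  field_simp
  ring
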